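/- With d = deg π and ψ_d := −U·(∂φ_d/∂U) ∈ A[U,V], for every polynomial P ∈ 𝔽_𝔭[U,V]: if φ̄_d does not divide P, then φ̄_d does not divide U·V·ψ̄_d·P in 𝔽_𝔭[U,V]. -/

import Mathlib

open MvPolynomial

/-- The isobaric polynomials `φ_d ∈ A[U,V]` (with `A = 𝔽_q[T]`), defined by the recursion
`φ_0 = 1`, `φ_1 = U − T^q·V`, and
`φ_d = φ_{d−1}·(U − T^q·V)^{q^{d−1}} + (T^{q^{d−1}} − T)·φ_{d−2}·(U^q·V)^{q^{d−2}}` for `d ≥ 2`.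
Here `U = X 0`, `V = X 1` and `T = Polynomial.X`. -/
noncomputable def phiPoly (Fq : Type) [Field Fq] (q : ℕ) :
    ℕ → MvPolynomial (Fin 2) (Polynomial Fq)
  | 0 => 1
  | 1 => X 0 - C (Polynomial.X ^ q) * X 1
  | (d + 2) =>
      phiPoly Fq q (d + 1) * (X 0 - C (Polynomial.X ^ q) * X 1) ^ q ^ (d + 1) +
        C (Polynomial.X ^ (q ^ (d + 1)) - Polynomial.X) * phiPoly Fq q d *
          (X 0 ^ q * X 1) ^ q ^ d

/-- The isobaric polynomial `ψ_d := −U·(∂φ_d/∂U) ∈ A[U,V]`, the unique isobaric polynomial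
with `∂(g_d) = ψ_d(Δ_W, Δ_T)·E_T`. -/
noncomputable def psiPoly (Fq : Type) [Field Fq] (q : ℕ) (d : ℕ) :
    MvPolynomial (Fin 2) (Polynomial Fq) :=
  - (X 0) * MvPolynomial.pderiv 0 (phiPoly Fq q d)

/-- The reduction of `phiPoly` along a ring map sending `T` to `t`, defined by the same
recursion. -/
noncomputable def phiBar (F : Type*) [CommRing F] (q : ℕ) (t : F) :
    ℕ → MvPolynomial (Fin 2) F
  | 0 => 1
  | 1 => X 0 - C (t ^ q) * X 1
  | (d + 2) =>
      phiBar F q t (d + 1) * (X 0 - C (t ^ q) * X 1) ^ q ^ (d + 1) +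
        C (t ^ (q ^ (d + 1)) - t) * phiBar F q t d * (X 0 ^ q * X 1) ^ q ^ d

theorem map_phiPoly (Fq : Type) [Field Fq] (q : ℕ) {F : Type*} [CommRing F]
    (f : Polynomial Fq →+* F) (d : ℕ) :
    MvPolynomial.map f (phiPoly Fq q d) = phiBar F q (f Polynomial.X) d := by
  induction d using Nat.strong_induction_on with
  | _ d ih =>
    match d with
    | 0 => simp [phiPoly, phiBar]
    | 1 => simp [phiPoly, phiBar]
    | (d+2) =>
      have h1 := ih (d+1) (by omega)
      have h0 := ih d (by omega)
      simp only [phiPoly, phiBar, map_add, map_mul, map_sub, map_pow, MvPolynomial.map_X,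
        MvPolynomial.map_C, h1, h0, map_sub, map_pow]

theorem pderiv_phiBar (F : Type*) [CommRing F] (q : ℕ) (t : F) (hq : (q : F) = 0) (d : ℕ) :
    pderiv 0 (phiBar F q t (d + 2)) =
      pderiv 0 (phiBar F q t (d + 1)) * (X 0 - C (t ^ q) * X 1) ^ q ^ (d + 1) +
        C (t ^ (q ^ (d + 1)) - t) * pderiv 0 (phiBar F q t d) * (X 0 ^ q * X 1) ^ q ^ d := by
  have hQ : ((q : ℕ) : MvPolynomial (Fin 2) F) = 0 := by
    rw [← MvPolynomial.C_eq_coe_nat, hq, map_zero]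
  have h1 : pderiv (0 : Fin 2)
      ((X 0 - C (t ^ q) * X 1 : MvPolynomial (Fin 2) F) ^ q ^ (d+1)) = 0 := by
    rw [pderiv_pow, Nat.cast_pow, hQ]
    ring
  have h2 : pderiv (0 : Fin 2) ((X 0 ^ q * X 1 : MvPolynomial (Fin 2) F) ^ q ^ d) = 0 := by
    rw [pderiv_pow, pderiv_mul, pderiv_pow, hQ, pderiv_X_of_ne (by decide : (1:Fin 2) ≠ 0)]
    ring
  rw [phiBar, map_add, pderiv_mul, h1, pderiv_mul, pderiv_C_mul, h2]
  ring

/-- The Wronskian-type combination of consecutive `phiBar`s. -/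
noncomputable def wron (F : Type*) [CommRing F] (q : ℕ) (t : F) (d : ℕ) :
    MvPolynomial (Fin 2) F :=
  pderiv 0 (phiBar F q t (d + 1)) * phiBar F q t d -
    pderiv 0 (phiBar F q t d) * phiBar F q t (d + 1)

theorem wron_zero (F : Type*) [CommRing F] (q : ℕ) (t : F) : wron F q t 0 = 1 := by
  simp only [wron, phiBar]
  rw [map_sub, pderiv_C_mul, pderiv_X_self, pderiv_X_of_ne (by decide : (1:Fin 2) ≠ 0)]
  simp

theorem wron_succ (F : Type*) [CommRing F] (q : ℕ) (t : F) (hq : (q : F) = 0) (d : ℕ) :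
    wron F q t (d + 1) =
      - (C (t ^ (q ^ (d + 1)) - t) * (X 0 ^ q * X 1) ^ q ^ d) * wron F q t d := by
  have h := pderiv_phiBar F q t hq d
  simp only [wron]
  rw [h, phiBar]
  ring

theorem X_zero_not_dvd_phiBar (F : Type*) [Field F] (q : ℕ) (hq : 0 < q) (t : F) (ht : t ≠ 0)
    (d : ℕ) : ¬ (X 0 : MvPolynomial (Fin 2) F) ∣ phiBar F q t d := by
  set e : MvPolynomial (Fin 2) F →ₐ[F] MvPolynomial (Fin 2) F := aeval ![0, X 1] with he
  have he0 : e (X 0) = 0 := by simp [he]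
  have he1 : e (X 1) = X 1 := by simp [he]
  have hC : ∀ a : F, e (C a) = C a := fun a => by simp [he]
  have hA : e (X 0 - C (t ^ q) * X 1) ≠ 0 := by
    rw [map_sub, map_mul, he0, he1, hC, zero_sub, neg_ne_zero]
    exact mul_ne_zero (C_ne_zero.mpr (pow_ne_zero _ ht)) (X_ne_zero 1)
  have key : ∀ d, e (phiBar F q t d) ≠ 0 ∧ e (phiBar F q t (d+1)) ≠ 0 := by
    intro d
    induction d with
    | zero =>
      refine ⟨by simp [phiBar], ?_⟩
      show e (X 0 - C (t ^ q) * X 1) ≠ 0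
      exact hA
    | succ n ih =>
      refine ⟨ih.2, ?_⟩
      have : e (phiBar F q t (n+2)) =
          e (phiBar F q t (n+1)) * e (X 0 - C (t ^ q) * X 1) ^ q ^ (n+1) := by
        have hB : e ((X 0 ^ q * X 1 : MvPolynomial (Fin 2) F) ^ q ^ n) = 0 := by
          rw [map_pow, map_mul, map_pow, he0, zero_pow hq.ne', zero_mul,
            zero_pow (pow_ne_zero _ hq.ne')]
        rw [phiBar, map_add, map_mul, map_mul, map_mul, map_pow, hB, mul_zero, add_zero]
      rw [this]
      exact mul_ne_zero ih.2 (pow_ne_zero _ hA)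
  intro ⟨c, hc⟩
  have := (key d).1
  rw [hc, map_mul, he0, zero_mul] at this
  exact this rfl

theorem X_one_not_dvd_phiBar (F : Type*) [Field F] (q : ℕ) (hq : 0 < q) (t : F)
    (d : ℕ) : ¬ (X 1 : MvPolynomial (Fin 2) F) ∣ phiBar F q t d := by
  set e : MvPolynomial (Fin 2) F →ₐ[F] MvPolynomial (Fin 2) F := aeval ![X 0, 0] with he
  have he0 : e (X 0) = X 0 := by simp [he]
  have he1 : e (X 1) = 0 := by simp [he]
  have hC : ∀ a : F, e (C a) = C a := fun a => by simp [he]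
  have hA : e (X 0 - C (t ^ q) * X 1) = X 0 := by
    rw [map_sub, map_mul, he0, he1, hC, mul_zero, sub_zero]
  have key : ∀ d, e (phiBar F q t d) ≠ 0 ∧ e (phiBar F q t (d+1)) ≠ 0 := by
    intro d
    induction d with
    | zero =>
      refine ⟨by simp [phiBar], ?_⟩
      show e (X 0 - C (t ^ q) * X 1) ≠ 0
      rw [hA]; exact X_ne_zero 0
    | succ n ih =>
      refine ⟨ih.2, ?_⟩
      have : e (phiBar F q t (n+2)) = e (phiBar F q t (n+1)) * (X 0) ^ q ^ (n+1) := by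
        have hB : e ((X 0 ^ q * X 1 : MvPolynomial (Fin 2) F) ^ q ^ n) = 0 := by
          rw [map_pow, map_mul, he1, mul_zero, zero_pow (pow_ne_zero _ hq.ne')]
        rw [phiBar, map_add, map_mul, map_mul, map_mul, map_pow, hB, mul_zero, add_zero, hA]
      rw [this]
      exact mul_ne_zero ih.2 (pow_ne_zero _ (X_ne_zero 0))
  intro ⟨c, hc⟩
  have := (key d).1
  rw [hc, map_mul, he1, zero_mul] at this
  exact this rfl

theorem prime_X_zero (F : Type*) [Field F] : Prime (X 0 : MvPolynomial (Fin 2) F) := by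
  rw [← MulEquiv.prime_iff (MvPolynomial.finSuccEquiv F 1).toRingEquiv.toMulEquiv]
  have : (MvPolynomial.finSuccEquiv F 1).toRingEquiv.toMulEquiv (X 0) =
      (Polynomial.X : Polynomial (MvPolynomial (Fin 1) F)) :=
    MvPolynomial.finSuccEquiv_X_zero
  rw [this]
  exact Polynomial.prime_X

theorem prime_X_one (F : Type*) [Field F] : Prime (X 1 : MvPolynomial (Fin 2) F) := by
  rw [← MulEquiv.prime_iff
    (MvPolynomial.renameEquiv F (Equiv.swap (0:Fin 2) 1)).toRingEquiv.toMulEquiv]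
  have : (MvPolynomial.renameEquiv F (Equiv.swap (0:Fin 2) 1)).toRingEquiv.toMulEquiv (X 1) =
      (X 0 : MvPolynomial (Fin 2) F) := by
    show rename (Equiv.swap (0:Fin 2) 1) (X 1) = X 0
    rw [rename_X, Equiv.swap_apply_right]
  rw [this]
  exact prime_X_zero F

theorem wron_prime_dvd (F : Type*) [Field F] (q : ℕ) (t : F) (hqF : (q : F) = 0) (D : ℕ)
    (hc : ∀ k, 1 ≤ k → k ≤ D → t ^ q ^ k ≠ t) :
    ∀ d, d ≤ D → ∀ g : MvPolynomial (Fin 2) F, Prime g → g ∣ wron F q t d →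
      g ∣ X 0 ∨ g ∣ X 1 := by
  intro d
  induction d with
  | zero =>
    intro _ g hg hdvd
    rw [wron_zero] at hdvd
    exact absurd (isUnit_of_dvd_one hdvd) hg.not_unit
  | succ n ih =>
    intro hn g hg hdvd
    rw [wron_succ F q t hqF n, neg_mul, dvd_neg] at hdvd
    rcases hg.dvd_mul.mp hdvd with h | h
    · rcases hg.dvd_mul.mp h with h2 | h2
      · exfalso
        have hc0 : t ^ q ^ (n + 1) - t ≠ 0 :=
          sub_ne_zero.mpr (hc (n + 1) (by omega) (by omega))
        have hu : IsUnit (C (t ^ q ^ (n + 1) - t) : MvPolynomial (Fin 2) F) :=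
          hc0.isUnit.map (C : F →+* MvPolynomial (Fin 2) F)
        exact hg.not_unit (isUnit_of_dvd_unit h2 hu)
      · have h3 := hg.dvd_of_dvd_pow h2
        rcases hg.dvd_mul.mp h3 with h4 | h4
        · exact Or.inl (hg.dvd_of_dvd_pow h4)
        · exact Or.inr h4
    · exact ih (by omega) g hg h

theorem phiBar_not_dvd (F : Type*) [Field F] (q : ℕ) (hq0 : 0 < q) (hqF : (q : F) = 0)
    (t : F) (ht : t ≠ 0) (D : ℕ) (hD : 0 < D)
    (hc : ∀ k, 1 ≤ k → k ≤ D - 1 → t ^ q ^ k ≠ t)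
    (P : MvPolynomial (Fin 2) F) (hndvd : ¬ phiBar F q t D ∣ P) :
    ¬ phiBar F q t D ∣ X 0 * X 1 * (- X 0 * pderiv 0 (phiBar F q t D)) * P := by
  intro hdvd
  obtain ⟨E, rfl⟩ : ∃ E, D = E + 1 := ⟨D - 1, by omega⟩
  set Φ := phiBar F q t (E + 1) with hΦ
  have hΦ0 : Φ ≠ 0 := by
    intro h
    exact X_zero_not_dvd_phiBar F q hq0 t ht (E + 1) (by rw [← hΦ, h]; exact dvd_zero _)
  have hrel : IsRelPrime Φ (X 0 * X 1 * (- X 0 * pderiv 0 Φ)) := by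
    intro g hgΦ hgM
    by_contra hgu
    have hgne : g ≠ 0 := fun h => hΦ0 (zero_dvd_iff.mp (h ▸ hgΦ))
    obtain ⟨g', hg'irr, hg'dvd⟩ := WfDvdMonoid.exists_irreducible_factor hgu hgne
    have hg' : Prime g' := UniqueFactorizationMonoid.irreducible_iff_prime.mp hg'irr
    have hg'Φ : g' ∣ Φ := hg'dvd.trans hgΦ
    have hg'M : g' ∣ X 0 * X 1 * (- X 0 * pderiv 0 Φ) := hg'dvd.trans hgM
    have hX0 : ¬ g' ∣ X 0 := by
      intro hdX
      have hass := hg'irr.associated_of_dvd (prime_X_zero F).irreducible hdX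
      exact X_zero_not_dvd_phiBar F q hq0 t ht (E + 1) (hass.symm.dvd.trans hg'Φ)
    have hX1 : ¬ g' ∣ X 1 := by
      intro hdX
      have hass := hg'irr.associated_of_dvd (prime_X_one F).irreducible hdX
      exact X_one_not_dvd_phiBar F q hq0 t (E + 1) (hass.symm.dvd.trans hg'Φ)
    rcases hg'.dvd_mul.mp hg'M with h | h
    · rcases hg'.dvd_mul.mp h with h2 | h2
      · exact hX0 h2
      · exact hX1 h2
    · rcases hg'.dvd_mul.mp h with h2 | h2
      · exact hX0 ((dvd_neg).mp h2)
      · have hwr : g' ∣ wron F q t E := by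
          have t1 : g' ∣ pderiv 0 (phiBar F q t (E + 1)) * phiBar F q t E :=
            dvd_mul_of_dvd_left h2 _
          have t2 : g' ∣ pderiv 0 (phiBar F q t E) * phiBar F q t (E + 1) :=
            dvd_mul_of_dvd_right hg'Φ _
          exact dvd_sub t1 t2
        rcases wron_prime_dvd F q t hqF E (by intro k h1 h2; exact hc k h1 (by omega))
            E le_rfl g' hg' hwr with h3 | h3
        · exact hX0 h3
        · exact hX1 h3
  exact hndvd (hrel.dvd_of_dvd_mul_left hdvd)

theorem nt_abstract (p r q : ℕ) (hp : p.Prime) (hr : 0 < r) (hq : q = p ^ r)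
    (Fq : Type) [Field Fq] [Fintype Fq] (hcard : Fintype.card Fq = q)
    (F : Type) [Field F] [Algebra Fq F] (t : F) (D : ℕ)
    (hDcard : Nat.card F = q ^ D)
    (hgen : ∀ x : F, ∃ f : Polynomial Fq, Polynomial.aeval t f = x) :
    ∀ k, 1 ≤ k → k ≤ D - 1 → t ^ q ^ k ≠ t := by
  haveI hfact : Fact p.Prime := ⟨hp⟩
  have hq1 : 1 < q := by rw [hq]; exact Nat.one_lt_pow hr.ne' hp.one_lt
  have hqF : (q : F) = 0 := by
    rw [← map_natCast (algebraMap Fq F) q, ← hcard, FiniteField.cast_card_eq_zero, map_zero]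
  have hpF : (p : F) = 0 := by
    have h2 : ((p : F)) ^ r = 0 := by rw [← Nat.cast_pow, ← hq, hqF]
    exact pow_eq_zero_iff hr.ne' |>.mp h2
  haveI : CharP F p := (CharP.charP_iff_prime_eq_zero hp).mpr hpF
  haveI : Finite F := Nat.finite_of_card_ne_zero (by rw [hDcard]; positivity)
  letI : Fintype F := Fintype.ofFinite F
  intro k hk1 hk2 htk
  have hrw : p ^ (r * k) = q ^ k := by rw [hq, pow_mul]
  have hall : ∀ x : F, x ^ q ^ k = x := by
    have hψ : (iterateFrobenius F p (r * k)).comp (Polynomial.aeval (R := Fq) t).toRingHom =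
        (Polynomial.aeval (R := Fq) t).toRingHom := by
      apply Polynomial.ringHom_ext
      · intro a
        simp only [RingHom.comp_apply, iterateFrobenius_def, AlgHom.toRingHom_eq_coe,
          RingHom.coe_coe, Polynomial.aeval_C]
        rw [hrw, ← map_pow]
        congr 1
        have := FiniteField.pow_card_pow (K := Fq) k a
        rwa [hcard] at this
      · simp only [RingHom.comp_apply, iterateFrobenius_def, AlgHom.toRingHom_eq_coe,
          RingHom.coe_coe, Polynomial.aeval_X]
        rw [hrw]
        exact htk
    intro x
    obtain ⟨f, rfl⟩ := hgen x
    have h3 := congrArg (fun g => g f) hψ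
    simpa [iterateFrobenius_def, hrw] using h3
  have hgdeg : ((Polynomial.X : Polynomial F) ^ q ^ k - Polynomial.X).natDegree = q ^ k :=
    FiniteField.X_pow_card_pow_sub_X_natDegree_eq F (by omega) hq1
  have hgne : ((Polynomial.X : Polynomial F) ^ q ^ k - Polynomial.X) ≠ 0 := by
    intro h
    rw [h, Polynomial.natDegree_zero] at hgdeg
    have : 0 < q ^ k := Nat.pow_pos (by omega)
    omega
  classical
  have hle : Fintype.card F ≤ q ^ k := by
    calc Fintype.card F = (Finset.univ : Finset F).card := rfl
      _ ≤ ((Polynomial.X : Polynomial F) ^ q ^ k - Polynomial.X).roots.toFinset.card :=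
          Finset.card_le_card (fun x _ => by
            rw [Multiset.mem_toFinset, Polynomial.mem_roots hgne]
            simp [Polynomial.IsRoot, hall x])
      _ ≤ Multiset.card ((Polynomial.X : Polynomial F) ^ q ^ k - Polynomial.X).roots :=
          Multiset.toFinset_card_le _
      _ ≤ ((Polynomial.X : Polynomial F) ^ q ^ k - Polynomial.X).natDegree :=
          Polynomial.card_roots' _
      _ = q ^ k := hgdeg
  rw [← Nat.card_eq_fintype_card, hDcard] at hle
  have hlt : q ^ k < q ^ D := Nat.pow_lt_pow_right hq1 (by omega)
  omega

theorem phiPoly_not_dvd_mul (p r q : ℕ) (hp : p.Prime) (hodd : Odd p)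
    (hr : 0 < r) (hq : q = p ^ r)
    (Fq : Type) [Field Fq] [Fintype Fq] (hcard : Fintype.card Fq = q)
    (π : Polynomial Fq) (hmonic : π.Monic) (hirr : Irreducible π)
    (hne : π ≠ Polynomial.X)
    (P : MvPolynomial (Fin 2) (Polynomial Fq ⧸ Ideal.span {π}))
    (hndvd : ¬ MvPolynomial.map (Ideal.Quotient.mk (Ideal.span {π}))
        (phiPoly Fq q π.natDegree) ∣ P) :
    ¬ MvPolynomial.map (Ideal.Quotient.mk (Ideal.span {π})) (phiPoly Fq q π.natDegree)
        ∣ X 0 * X 1 *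
            MvPolynomial.map (Ideal.Quotient.mk (Ideal.span {π})) (psiPoly Fq q π.natDegree)
            * P := by
  haveI hmax : (Ideal.span {π}).IsMaximal := PrincipalIdealRing.isMaximal_of_irreducible hirr
  letI : Field (Polynomial Fq ⧸ Ideal.span {π}) := Ideal.Quotient.field _
  set mkI := Ideal.Quotient.mk (Ideal.span {π}) with hmkI
  set t := mkI Polynomial.X with htdef
  set D := π.natDegree with hDdef
  -- basic facts
  have hq0 : 0 < q := by rw [hq]; exact Nat.pow_pos hp.pos
  have hD : 0 < D := hirr.natDegree_pos
  have ht : t ≠ 0 := by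
    intro h
    rw [htdef, Ideal.Quotient.eq_zero_iff_mem, Ideal.mem_span_singleton] at h
    have hass := hirr.associated_of_dvd Polynomial.irreducible_X h
    exact hne (Polynomial.eq_of_monic_of_associated hmonic Polynomial.monic_X hass)
  have hqF : (q : Polynomial Fq ⧸ Ideal.span {π}) = 0 := by
    rw [← map_natCast (algebraMap Fq (Polynomial Fq ⧸ Ideal.span {π})) q, ← hcard,
      FiniteField.cast_card_eq_zero, map_zero]
  -- cardinality of the residue field
  letI : Fintype (AdjoinRoot π) := Module.fintypeOfFintype (AdjoinRoot.powerBasis' hmonic).basis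
  have hDcard : Nat.card (Polynomial Fq ⧸ Ideal.span {π}) = q ^ D := by
    have h1 : Nat.card (AdjoinRoot π) = q ^ D := by
      rw [Nat.card_eq_fintype_card, Module.card_fintype (AdjoinRoot.powerBasis' hmonic).basis]
      simp [hcard, hDdef]
    exact h1
  have hgen : ∀ x : Polynomial Fq ⧸ Ideal.span {π},
      ∃ f : Polynomial Fq, Polynomial.aeval t f = x := by
    have haev : ∀ f : Polynomial Fq, Polynomial.aeval (R := Fq) t f = mkI f := by
      have hhom : (Polynomial.aeval (R := Fq) t).toRingHom = mkI := by
        apply Polynomial.ringHom_ext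
        · intro a
          simp only [AlgHom.toRingHom_eq_coe, RingHom.coe_coe, Polynomial.aeval_C]
          rw [hmkI, ← Polynomial.algebraMap_eq, Ideal.Quotient.mk_algebraMap]
        · simp [htdef]
      intro f
      exact congrArg (fun g => g f) hhom
    intro x
    obtain ⟨f, rfl⟩ := Ideal.Quotient.mk_surjective x
    exact ⟨f, haev f⟩
  have hc : ∀ k, 1 ≤ k → k ≤ D - 1 → t ^ q ^ k ≠ t :=
    nt_abstract p r q hp hr hq Fq hcard _ t D hDcard hgen
  -- rewrite the statement in terms of phiBar
  have hmap : MvPolynomial.map mkI (phiPoly Fq q D) =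
      phiBar (Polynomial Fq ⧸ Ideal.span {π}) q t D := map_phiPoly Fq q mkI D
  have hpsi : MvPolynomial.map mkI (psiPoly Fq q D) =
      - X 0 * pderiv 0 (phiBar (Polynomial Fq ⧸ Ideal.span {π}) q t D) := by
    rw [psiPoly, map_mul, map_neg, MvPolynomial.map_X, ← pderiv_map, hmap]
  rw [hmap] at hndvd ⊢
  rw [hpsi]
  exact phiBar_not_dvd _ q hq0 hqF t ht D hD hc P hndvd
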